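/- The map Φ₄(A,B) = tr(A+B) − 2 tr exp((log A + log B)/2) on pairs of positive definite matrices satisfies Φ₄(A,B) ≥ 0 with equality if and only if A = B. -/

import Mathlib

open scoped ComplexOrder
open MeasureTheory

/-- The positive semidefinite square root of a matrix (zero if not positive semidefinite). -/
noncomputable def msqrt {N : ℕ} (A : Matrix (Fin N) (Fin N) ℂ) : Matrix (Fin N) (Fin N) ℂ :=
  by classical exact if h : A.PosSemidef then
    (h.1.eigenvectorUnitary : Matrix (Fin N) (Fin N) ℂ) *
      Matrix.diagonal (fun i => ((Real.sqrt (h.1.eigenvalues i) : ℝ) : ℂ)) *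
      (star h.1.eigenvectorUnitary : Matrix (Fin N) (Fin N) ℂ) else 0

/-- The Pusz–Woronowicz geometric mean `A # B = A^{1/2} (A^{-1/2} B A^{-1/2})^{1/2} A^{1/2}`. -/
noncomputable def geom {N : ℕ} (A B : Matrix (Fin N) (Fin N) ℂ) : Matrix (Fin N) (Fin N) ℂ :=
  msqrt A * msqrt ((msqrt A)⁻¹ * B * (msqrt A)⁻¹) * msqrt A

/-- The logarithm of a Hermitian matrix, via the spectral theorem (zero if not Hermitian). -/
noncomputable def mlog {N : ℕ} (A : Matrix (Fin N) (Fin N) ℂ) : Matrix (Fin N) (Fin N) ℂ :=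
  by classical exact if h : A.IsHermitian then h.cfc Real.log else 0

/-- The log Euclidean mean `exp((log A + log B)/2)`. -/
noncomputable def logEuclid {N : ℕ} (A B : Matrix (Fin N) (Fin N) ℂ) : Matrix (Fin N) (Fin N) ℂ :=
  NormedSpace.exp ((2:ℂ)⁻¹ • (mlog A + mlog B))

section Aux

open Matrix Finset

variable {N : ℕ}

lemma aux_entry (P : Matrix (Fin N) (Fin N) ℂ) (d : Fin N → ℂ) (k i : Fin N) :
    (P * diagonal d * star P) k i = ∑ j, P k j * d j * (starRingEnd ℂ) (P i j) := by
  rw [Matrix.mul_apply]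
  simp only [Matrix.mul_diagonal, Matrix.star_apply, Matrix.conjTranspose_apply]
  rfl

lemma aux_conj (V W : Matrix (Fin N) (Fin N) ℂ) (d : Fin N → ℂ) :
    star V * (W * diagonal d * star W) * V
      = (star V * W) * diagonal d * star (star V * W) := by
  rw [Matrix.star_mul, star_star]
  simp only [Matrix.mul_assoc]

lemma aux_PstarP (P : Matrix (Fin N) (Fin N) ℂ) (k i : Fin N) :
    (P * star P) k i = ∑ j, P k j * (starRingEnd ℂ) (P i j) := by
  rw [Matrix.mul_apply]
  simp only [Matrix.star_apply, Matrix.conjTranspose_apply]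
  rfl

lemma aux_weight (P : Matrix (Fin N) (Fin N) ℂ) (hP : P * star P = 1) (i : Fin N) :
    ∑ j, Complex.normSq (P i j) = 1 := by
  have h := (aux_PstarP P i i).symm.trans (by rw [hP, Matrix.one_apply_eq])
  have : ∑ j, (Complex.normSq (P i j) : ℂ) = 1 := by
    rw [← h]
    refine Finset.sum_congr rfl fun j _ => ?_
    rw [← Complex.mul_conj]
  exact_mod_cast this

lemma aux_jensen (p ξ : Fin N → ℝ) (hp : ∀ j, 0 ≤ p j) (hp1 : ∑ j, p j = 1) :
    Real.exp (∑ j, p j * ξ j) ≤ ∑ j, p j * Real.exp (ξ j) := by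
  have := convexOn_exp.map_sum_le (t := Finset.univ) (w := p) (p := ξ)
    (fun i _ => hp i) hp1 (fun i _ => Set.mem_univ _)
  simpa [smul_eq_mul] using this

lemma aux_jensen_eq (p ξ : Fin N → ℝ) (hp : ∀ j, 0 ≤ p j) (hp1 : ∑ j, p j = 1)
    (heq : Real.exp (∑ j, p j * ξ j) = ∑ j, p j * Real.exp (ξ j)) :
    ∀ j, p j ≠ 0 → ξ j = ∑ k, p k * ξ k := by
  have h := (strictConvexOn_exp.map_sum_eq_iff' (t := Finset.univ) (w := p) (p := ξ)
    (fun i _ => hp i) hp1 (fun i _ => Set.mem_univ _)).mp (by simpa [smul_eq_mul] using heq)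
  intro j hj
  simpa [smul_eq_mul] using h j (Finset.mem_univ j) hj

lemma aux_exp_conj (W : Matrix (Fin N) (Fin N) ℂ) (hW : W ∈ Matrix.unitaryGroup (Fin N) ℂ)
    (ξ : Fin N → ℝ) :
    NormedSpace.exp (W * Matrix.diagonal (Complex.ofReal ∘ ξ) * star W)
      = W * Matrix.diagonal (Complex.ofReal ∘ Real.exp ∘ ξ) * star W := by
  have h2 : W * star W = 1 := Matrix.mem_unitaryGroup_iff.mp hW
  have hinv : W⁻¹ = star W := Matrix.inv_eq_right_inv h2
  have hU : IsUnit W := Matrix.isUnit_iff_isUnit_det W |>.mpr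
    (IsUnit.of_mul_eq_one _ (by rw [← Matrix.det_mul, h2, Matrix.det_one]))
  have hfun : NormedSpace.exp (Complex.ofReal ∘ ξ) = Complex.ofReal ∘ Real.exp ∘ ξ := by
    funext j
    simp only [Pi.exp_def, Function.comp_apply, ← Complex.exp_eq_exp_ℂ, Complex.ofReal_exp]
  rw [← hinv, Matrix.exp_conj W _ hU, Matrix.exp_diagonal, hfun, hinv]

lemma mlog_eq {A : Matrix (Fin N) (Fin N) ℂ} (hA : A.IsHermitian) :
    mlog A = (hA.eigenvectorUnitary : Matrix (Fin N) (Fin N) ℂ)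
      * Matrix.diagonal (Complex.ofReal ∘ Real.log ∘ hA.eigenvalues)
      * star (hA.eigenvectorUnitary : Matrix (Fin N) (Fin N) ℂ) := by
  unfold mlog
  rw [dif_pos hA]
  rfl

lemma aux_diag (V W : Matrix (Fin N) (Fin N) ℂ) (ξ : Fin N → ℝ) (i : Fin N) :
    (star V * (W * Matrix.diagonal (Complex.ofReal ∘ ξ) * star W) * V) i i
      = ((∑ j, Complex.normSq ((star V * W) i j) * ξ j : ℝ) : ℂ) := by
  rw [aux_conj, aux_entry]
  push_cast
  refine Finset.sum_congr rfl fun j _ => ?_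
  rw [mul_comm ((star V * W) i j) _, mul_assoc, Complex.mul_conj]
  simp only [Function.comp_apply]
  ring

lemma aux_col (V W : Matrix (Fin N) (Fin N) ℂ)
    (hP : (star V * W) * star (star V * W) = 1) (ξ : Fin N → ℝ) (i : Fin N) (t : ℝ)
    (h : ∀ j, (star V * W) i j ≠ 0 → ξ j = t) (k : Fin N) :
    (star V * (W * Matrix.diagonal (Complex.ofReal ∘ ξ) * star W) * V) k i
      = (t : ℂ) * (1 : Matrix (Fin N) (Fin N) ℂ) k i := by
  rw [aux_conj, aux_entry]
  have : ∀ j, (star V * W) k j * (Complex.ofReal ∘ ξ) j * (starRingEnd ℂ) ((star V * W) i j)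
      = (t : ℂ) * ((star V * W) k j * (starRingEnd ℂ) ((star V * W) i j)) := by
    intro j
    by_cases hj : (star V * W) i j = 0
    · simp [hj]
    · simp only [Function.comp_apply]; rw [h j hj]; ring
  rw [Finset.sum_congr rfl fun j _ => this j, ← Finset.mul_sum, ← aux_PstarP, hP]

lemma aux_trace (V M : Matrix (Fin N) (Fin N) ℂ) (hV : V * star V = 1) :
    M.trace = ∑ i, (star V * M * V) i i := by
  have h : (star V * M * V).trace = M.trace := by
    rw [Matrix.trace_mul_cycle, hV, Matrix.one_mul]
  rw [← h]
  rfl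

end Aux

theorem stmt5 {N : ℕ} (A B : Matrix (Fin N) (Fin N) ℂ) (hA : A.PosDef) (hB : B.PosDef) :
    0 ≤ (A + B).trace - 2 * (logEuclid A B).trace ∧
    ((A + B).trace - 2 * (logEuclid A B).trace = 0 ↔ A = B) := by
  classical
  open Matrix Finset in
  have hAH := hA.1
  have hBH := hB.1
  set X := mlog A with hXdef
  set Y := mlog B with hYdef
  set WA : Matrix (Fin N) (Fin N) ℂ := (hAH.eigenvectorUnitary : Matrix (Fin N) (Fin N) ℂ) with hWAdef
  set WB : Matrix (Fin N) (Fin N) ℂ := (hBH.eigenvectorUnitary : Matrix (Fin N) (Fin N) ℂ) with hWBdef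
  set μ := hAH.eigenvalues with hμdef
  set κ := hBH.eigenvalues with hκdef
  have hWA2 : WA * star WA = 1 := Matrix.mem_unitaryGroup_iff.mp hAH.eigenvectorUnitary.2
  have hWB2 : WB * star WB = 1 := Matrix.mem_unitaryGroup_iff.mp hBH.eigenvectorUnitary.2
  have hXeq : X = WA * Matrix.diagonal (Complex.ofReal ∘ Real.log ∘ μ) * star WA := mlog_eq hAH
  have hYeq : Y = WB * Matrix.diagonal (Complex.ofReal ∘ Real.log ∘ κ) * star WB := mlog_eq hBH
  have hAspec : A = WA * Matrix.diagonal (Complex.ofReal ∘ μ) * star WA := hAH.spectral_theorem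
  have hBspec : B = WB * Matrix.diagonal (Complex.ofReal ∘ κ) * star WB := hBH.spectral_theorem
  -- exp of the logs recovers the matrices
  have hexpXA : NormedSpace.exp X = A := by
    rw [hXeq, aux_exp_conj WA hAH.eigenvectorUnitary.2]
    have hc : Complex.ofReal ∘ Real.exp ∘ Real.log ∘ μ = Complex.ofReal ∘ μ := by
      funext j
      simp only [Function.comp_apply]
      rw [Real.exp_log (hA.eigenvalues_pos j)]
    rw [hc, ← hAspec]
  have hexpYB : NormedSpace.exp Y = B := by
    rw [hYeq, aux_exp_conj WB hBH.eigenvectorUnitary.2]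
    have hc : Complex.ofReal ∘ Real.exp ∘ Real.log ∘ κ = Complex.ofReal ∘ κ := by
      funext j
      simp only [Function.comp_apply]
      rw [Real.exp_log (hB.eigenvalues_pos j)]
    rw [hc, ← hBspec]
  -- the Hermitian midpoint
  have hXH : X.IsHermitian := by
    rw [hXdef]
    unfold mlog
    rw [dif_pos hAH]
    exact (Matrix.IsHermitian.cfc_eq hAH Real.log) ▸ cfc_predicate Real.log A
  have hYH : Y.IsHermitian := by
    rw [hYdef]
    unfold mlog
    rw [dif_pos hBH]
    exact (Matrix.IsHermitian.cfc_eq hBH Real.log) ▸ cfc_predicate Real.log B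
  set H : Matrix (Fin N) (Fin N) ℂ := (2:ℂ)⁻¹ • (X + Y) with hHdef
  have hHH : H.IsHermitian := by
    show Hᴴ = H
    rw [hHdef, Matrix.conjTranspose_smul, Matrix.conjTranspose_add, hXH, hYH]
    norm_num
  set V : Matrix (Fin N) (Fin N) ℂ := (hHH.eigenvectorUnitary : Matrix (Fin N) (Fin N) ℂ) with hVdef
  set ν := hHH.eigenvalues with hνdef
  have hV1 : star V * V = 1 := Matrix.mem_unitaryGroup_iff'.mp hHH.eigenvectorUnitary.2
  have hV2 : V * star V = 1 := Matrix.mem_unitaryGroup_iff.mp hHH.eigenvectorUnitary.2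
  have hHspec : H = V * Matrix.diagonal (Complex.ofReal ∘ ν) * star V := hHH.spectral_theorem
  -- the transition matrices
  have hPA : (star V * WA) * star (star V * WA) = 1 := by
    rw [Matrix.star_mul, star_star, Matrix.mul_assoc, ← Matrix.mul_assoc WA, hWA2,
      Matrix.one_mul, hV1]
  have hPB : (star V * WB) * star (star V * WB) = 1 := by
    rw [Matrix.star_mul, star_star, Matrix.mul_assoc, ← Matrix.mul_assoc WB, hWB2,
      Matrix.one_mul, hV1]
  set pA : Fin N → Fin N → ℝ := fun i j => Complex.normSq ((star V * WA) i j) with hpAdef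
  set pB : Fin N → Fin N → ℝ := fun i j => Complex.normSq ((star V * WB) i j) with hpBdef
  have hpA0 : ∀ i j, 0 ≤ pA i j := fun i j => Complex.normSq_nonneg _
  have hpB0 : ∀ i j, 0 ≤ pB i j := fun i j => Complex.normSq_nonneg _
  have hpA1 : ∀ i, ∑ j, pA i j = 1 := fun i => aux_weight _ hPA i
  have hpB1 : ∀ i, ∑ j, pB i j = 1 := fun i => aux_weight _ hPB i
  set x : Fin N → ℝ := fun i => ∑ j, pA i j * Real.log (μ j) with hxdef
  set y : Fin N → ℝ := fun i => ∑ j, pB i j * Real.log (κ j) with hydef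
  set a : Fin N → ℝ := fun i => ∑ j, pA i j * μ j with hadef
  set b : Fin N → ℝ := fun i => ∑ j, pB i j * κ j with hbdef
  -- diagonal entries
  have hXd : ∀ i, (star V * X * V) i i = (x i : ℂ) := fun i => by
    rw [hXeq]; exact aux_diag V WA _ i
  have hYd : ∀ i, (star V * Y * V) i i = (y i : ℂ) := fun i => by
    rw [hYeq]; exact aux_diag V WB _ i
  have hAd : ∀ i, (star V * A * V) i i = (a i : ℂ) := fun i => by
    rw [hAspec]; exact aux_diag V WA _ i
  have hBd : ∀ i, (star V * B * V) i i = (b i : ℂ) := fun i => by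
    rw [hBspec]; exact aux_diag V WB _ i
  -- the eigenvalues of H are the midpoints
  have hdiagH : star V * H * V = Matrix.diagonal (Complex.ofReal ∘ ν) := by
    rw [hHspec, ← Matrix.mul_assoc, ← Matrix.mul_assoc, hV1, Matrix.one_mul,
      Matrix.mul_assoc, hV1, Matrix.mul_one]
  have hν : ∀ i, ν i = (x i + y i) / 2 := by
    intro i
    have h1 : (star V * H * V) i i = ((ν i : ℝ) : ℂ) := by
      rw [hdiagH]; simp [Matrix.diagonal_apply_eq]
    have h2 : star V * H * V = (2:ℂ)⁻¹ • (star V * X * V + star V * Y * V) := by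
      rw [hHdef, Matrix.mul_smul, Matrix.smul_mul, Matrix.mul_add, Matrix.add_mul]
    have h3 : ((ν i : ℝ) : ℂ) = (2:ℂ)⁻¹ * ((x i : ℂ) + (y i : ℂ)) := by
      rw [← h1, h2]
      simp [Matrix.smul_apply, Matrix.add_apply, hXd i, hYd i]
    have h4 : ((ν i : ℝ) : ℂ) = (((x i + y i) / 2 : ℝ) : ℂ) := by
      rw [h3]; push_cast; ring
    exact_mod_cast h4
  -- traces
  have htrA : A.trace = ((∑ i, a i : ℝ) : ℂ) := by
    rw [aux_trace V A hV2]
    push_cast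
    exact Finset.sum_congr rfl fun i _ => hAd i
  have htrB : B.trace = ((∑ i, b i : ℝ) : ℂ) := by
    rw [aux_trace V B hV2]
    push_cast
    exact Finset.sum_congr rfl fun i _ => hBd i
  have hLE : logEuclid A B = V * Matrix.diagonal (Complex.ofReal ∘ Real.exp ∘ ν) * star V := by
    show NormedSpace.exp ((2:ℂ)⁻¹ • (mlog A + mlog B)) = _
    rw [← hXdef, ← hYdef, ← hHdef, hHspec, aux_exp_conj V hHH.eigenvectorUnitary.2]
  have htrE : (logEuclid A B).trace = ((∑ i, Real.exp (ν i) : ℝ) : ℂ) := by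
    rw [hLE, Matrix.trace_mul_cycle, hV1, Matrix.one_mul, Matrix.trace_diagonal]
    push_cast
    simp [Function.comp_apply, Complex.ofReal_exp]
  -- the quantity as a real sum
  set g : Fin N → ℝ := fun i => a i + b i - 2 * Real.exp (ν i) with hgdef
  have hkey : (A + B).trace - 2 * (logEuclid A B).trace = ((∑ i, g i : ℝ) : ℂ) := by
    have hre : ∑ i, g i = (∑ i, a i) + (∑ i, b i) - 2 * ∑ i, Real.exp (ν i) := by
      simp only [hgdef]
      rw [Finset.sum_sub_distrib, Finset.sum_add_distrib, Finset.mul_sum]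
    rw [Matrix.trace_add, htrA, htrB, htrE, hre]
    push_cast
    ring
  -- pointwise inequalities
  have hxa : ∀ i, Real.exp (x i) ≤ a i := by
    intro i
    have h := aux_jensen (pA i) (fun j => Real.log (μ j)) (hpA0 i) (hpA1 i)
    calc Real.exp (x i) ≤ ∑ j, pA i j * Real.exp (Real.log (μ j)) := h
      _ = a i := Finset.sum_congr rfl fun j _ => by rw [Real.exp_log (hA.eigenvalues_pos j)]
  have hyb : ∀ i, Real.exp (y i) ≤ b i := by
    intro i
    have h := aux_jensen (pB i) (fun j => Real.log (κ j)) (hpB0 i) (hpB1 i)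
    calc Real.exp (y i) ≤ ∑ j, pB i j * Real.exp (Real.log (κ j)) := h
      _ = b i := Finset.sum_congr rfl fun j _ => by rw [Real.exp_log (hB.eigenvalues_pos j)]
  have hmid : ∀ i, 2 * Real.exp (ν i) ≤ Real.exp (x i) + Real.exp (y i) := by
    intro i
    have h := convexOn_exp.2 (Set.mem_univ (x i)) (Set.mem_univ (y i))
      (by norm_num : (0:ℝ) ≤ 1/2) (by norm_num : (0:ℝ) ≤ 1/2) (by norm_num)
    simp only [smul_eq_mul] at h
    have hx : (1/2 : ℝ) * x i + (1/2) * y i = ν i := by rw [hν i]; ring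
    rw [hx] at h
    linarith
  have hg0 : ∀ i, 0 ≤ g i := by
    intro i
    have := hxa i; have := hyb i; have := hmid i
    simp only [hgdef]
    linarith
  have hsum0 : (0:ℝ) ≤ ∑ i, g i := Finset.sum_nonneg fun i _ => hg0 i
  constructor
  · rw [hkey]
    exact_mod_cast hsum0
  constructor
  · -- equality implies A = B
    intro h0
    rw [hkey] at h0
    have hS : ∑ i, g i = 0 := by exact_mod_cast h0
    have hgz : ∀ i, g i = 0 := by
      intro i
      have := (Finset.sum_eq_zero_iff_of_nonneg (fun i _ => hg0 i)).mp hS i (Finset.mem_univ i)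
      exact this
    -- per-index equalities
    have heqs : ∀ i, a i = Real.exp (x i) ∧ b i = Real.exp (y i) ∧
        2 * Real.exp (ν i) = Real.exp (x i) + Real.exp (y i) := by
      intro i
      have h1 := hxa i; have h2 := hyb i; have h3 := hmid i
      have h4 : a i + b i - 2 * Real.exp (ν i) = 0 := hgz i
      refine ⟨by linarith, by linarith, by linarith⟩
    have hxy : ∀ i, x i = y i := by
      intro i
      by_contra hne
      have h := strictConvexOn_exp.2 (Set.mem_univ (x i)) (Set.mem_univ (y i)) hne
        (by norm_num : (0:ℝ) < 1/2) (by norm_num : (0:ℝ) < 1/2) (by norm_num)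
      simp only [smul_eq_mul] at h
      have hx : (1/2 : ℝ) * x i + (1/2) * y i = ν i := by rw [hν i]; ring
      rw [hx] at h
      have := (heqs i).2.2
      linarith
    -- columns
    have hcolX : ∀ i k, (star V * X * V) k i = (x i : ℂ) * (1 : Matrix (Fin N) (Fin N) ℂ) k i := by
      intro i k
      have heqA : Real.exp (∑ j, pA i j * Real.log (μ j))
          = ∑ j, pA i j * Real.exp (Real.log (μ j)) := by
        show Real.exp (x i) = _
        rw [← (heqs i).1]
        exact (Finset.sum_congr rfl fun j _ => by
          rw [Real.exp_log (hA.eigenvalues_pos j)]).symm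
      have hcol := aux_jensen_eq (pA i) (fun j => Real.log (μ j)) (hpA0 i) (hpA1 i) heqA
      rw [hXeq]
      refine aux_col V WA hPA _ i (x i) ?_ k
      intro j hj
      exact hcol j (fun hc => hj (by rwa [hpAdef, Complex.normSq_eq_zero] at hc))
    have hcolY : ∀ i k, (star V * Y * V) k i = (y i : ℂ) * (1 : Matrix (Fin N) (Fin N) ℂ) k i := by
      intro i k
      have heqB : Real.exp (∑ j, pB i j * Real.log (κ j))
          = ∑ j, pB i j * Real.exp (Real.log (κ j)) := by
        show Real.exp (y i) = _
        rw [← (heqs i).2.1]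
        exact (Finset.sum_congr rfl fun j _ => by
          rw [Real.exp_log (hB.eigenvalues_pos j)]).symm
      have hcol := aux_jensen_eq (pB i) (fun j => Real.log (κ j)) (hpB0 i) (hpB1 i) heqB
      rw [hYeq]
      refine aux_col V WB hPB _ i (y i) ?_ k
      intro j hj
      exact hcol j (fun hc => hj (by rwa [hpBdef, Complex.normSq_eq_zero] at hc))
    have hXYc : star V * X * V = star V * Y * V := by
      ext k i
      rw [hcolX i k, hcolY i k, hxy i]
    have hXY : X = Y := by
      have h := congrArg (fun M => V * M * star V) hXYc
      calc X = (V * star V) * X * (V * star V) := by rw [hV2, Matrix.one_mul, Matrix.mul_one]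
        _ = V * (star V * X * V) * star V := by simp only [Matrix.mul_assoc]
        _ = V * (star V * Y * V) * star V := by rw [hXYc]
        _ = (V * star V) * Y * (V * star V) := by simp only [Matrix.mul_assoc]
        _ = Y := by rw [hV2, Matrix.one_mul, Matrix.mul_one]
    rw [← hexpXA, ← hexpYB, hXY]
  · -- A = B implies equality
    intro hAB
    subst hAB
    have hEA : logEuclid A A = A := by
      show NormedSpace.exp ((2:ℂ)⁻¹ • (mlog A + mlog A)) = A
      have : (2:ℂ)⁻¹ • (mlog A + mlog A) = mlog A := by
        rw [← two_smul ℂ (mlog A), smul_smul]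
        norm_num
      rw [this, ← hXdef, hexpXA]
    rw [hEA, Matrix.trace_add]
    ring
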